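/- arXiv:2104.09706 — 2 statements merged into one kernel-verified Lean document; each statement's English description precedes it below -/
import Mathlib

section
/- Among all connected graphs on n vertices (n >= 3) with unit edge resistances in which the edge ab is not a cut-edge, the quantity R'_{ab} - R_{ab} (the increase in effective resistance between the endpoints a and b upon deleting the edge ab) attains its maximum value (n-1)^2/n for the n-cycle C_n. -/
open Finset

section Defs

variable {V : Type*} [Fintype V]

/-- Total conductance at a vertex. -/
noncomputable def condAt (c : V → V → ℝ) (x : V) : ℝ := ∑ y, c x y

/-- Transition probabilities of the random walk induced by conductances `c`. -/
noncomputable def step (c : V → V → ℝ) (x y : V) : ℝ := c x y / condAt c x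

open scoped Classical in
/-- `surv P b n a` is the probability that the walk with transition matrix `P`
started at `a` has not visited `b` by time `n`. -/
noncomputable def surv (P : V → V → ℝ) (b : V) : ℕ → V → ℝ
  | 0 => fun a => if a = b then 0 else 1
  | n + 1 => fun a => if a = b then 0 else ∑ y, P a y * surv P b n y

/-- Expected hitting time of `b` starting from `a`, as the sum over `n` of the
survival probabilities `P(T_b > n)`. -/
noncomputable def hitTime (P : V → V → ℝ) (a b : V) : ℝ := ∑' n, surv P b n a

/-- Expected return time to `z` : one step plus the expected hitting time of `z`
from the position after the first step. -/
noncomputable def returnTime (P : V → V → ℝ) (z : V) : ℝ :=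
  1 + ∑ y, P z y * hitTime P y z

/-- Dirichlet energy of a potential `f` for conductances `c`. -/
noncomputable def energy (c : V → V → ℝ) (f : V → ℝ) : ℝ :=
  (1 / 2) * ∑ x, ∑ y, c x y * (f x - f y) ^ 2

/-- Effective resistance between `a` and `b` (Dirichlet principle): the
reciprocal of the minimal Dirichlet energy among potentials with
`f a = 1`, `f b = 0`. -/
noncomputable def effRes (c : V → V → ℝ) (a b : V) : ℝ :=
  1 / sInf {E : ℝ | ∃ f : V → ℝ, f a = 1 ∧ f b = 0 ∧ E = energy c f}

end Defs

open scoped Classical in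
/-- Unit conductances on the edges of a simple graph. -/
noncomputable def gw {V : Type*} (G : SimpleGraph V) (x y : V) : ℝ :=
  if G.Adj x y then 1 else 0

/-- Number of edges of a simple graph. -/
noncomputable def numEdges {V : Type*} (G : SimpleGraph V) : ℕ := G.edgeSet.ncard

section Aux

variable {V : Type*} [Fintype V]

lemma gw_nonneg (G : SimpleGraph V) (x y : V) : 0 ≤ gw G x y := by
  unfold gw; split <;> norm_num

lemma energy_nonneg (G : SimpleGraph V) (f : V → ℝ) : 0 ≤ energy (gw G) f :=
  mul_nonneg (by norm_num) <| Finset.sum_nonneg fun x _ =>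
    Finset.sum_nonneg fun y _ => mul_nonneg (gw_nonneg G x y) (sq_nonneg _)

/-- The set of energies of admissible potentials. -/
def resSet (c : V → V → ℝ) (a b : V) : Set ℝ :=
  {E : ℝ | ∃ f : V → ℝ, f a = 1 ∧ f b = 0 ∧ E = energy c f}

lemma effRes_def (c : V → V → ℝ) (a b : V) : effRes c a b = 1 / sInf (resSet c a b) := rfl

lemma resSet_nonempty {a b : V} (hab : a ≠ b) (c : V → V → ℝ) : (resSet c a b).Nonempty := by
  classical
  exact ⟨_, (fun x => if x = a then (1:ℝ) else 0), by simp, by simp [hab.symm], rfl⟩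

lemma resSet_bddBelow (G : SimpleGraph V) (a b : V) : BddBelow (resSet (gw G) a b) := by
  refine ⟨0, fun E hE => ?_⟩
  obtain ⟨f, _, _, rfl⟩ := hE
  exact energy_nonneg G f

lemma resSet_symm (c : V → V → ℝ) (a b : V) : resSet c a b = resSet c b a := by
  have key : ∀ f : V → ℝ, energy c (fun x => 1 - f x) = energy c f := by
    intro f
    unfold energy
    congr 1
    apply Finset.sum_congr rfl; intro x _
    apply Finset.sum_congr rfl; intro y _
    ring
  ext E
  constructor <;> rintro ⟨f, h1, h0, rfl⟩ <;>
    exact ⟨fun x => 1 - f x, by simp [h0], by simp [h1], (key f).symm⟩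

lemma walk_telescope {G : SimpleGraph V} {a b : V} (p : G.Walk a b) (f : V → ℝ) :
    (p.darts.map (fun d => f d.toProd.1 - f d.toProd.2)).sum = f a - f b := by
  induction p with
  | nil => simp
  | cons h p ih => simp [ih]

lemma energy_lower (G : SimpleGraph V) {a b : V} (hr : G.Reachable a b)
    {f : V → ℝ} (ha : f a = 1) (hb : f b = 0) :
    1 / ((Fintype.card V : ℝ) - 1) ≤ energy (gw G) f := by
  classical
  obtain ⟨w⟩ := hr
  obtain ⟨q, hq⟩ := w.toPath
  have hab : a ≠ b := by rintro rfl; rw [hb] at ha; norm_num at ha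
  have hL0 : 0 < q.length := by
    rcases Nat.eq_zero_or_pos q.length with h | h
    · exact absurd (q.eq_of_length_eq_zero h) hab
    · exact h
  have hLcard : (q.length : ℝ) ≤ (Fintype.card V : ℝ) - 1 := by
    have h1 : q.length + 1 ≤ Fintype.card V := hq.length_lt
    have h2 : ((q.length + 1 : ℕ) : ℝ) ≤ (Fintype.card V : ℝ) := Nat.cast_le.2 h1
    push_cast at h2
    linarith
  have hnodupE : (q.darts.map SimpleGraph.Dart.edge).Nodup := hq.isTrail.edges_nodup
  have hnodupD : q.darts.Nodup := List.Nodup.of_map _ hnodupE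
  have h1 : (q.darts.map SimpleGraph.Dart.toProd).Nodup :=
    hnodupD.map (SimpleGraph.Dart.toProd_injective)
  have h2 : (q.darts.map (fun d => d.toProd.swap)).Nodup :=
    hnodupD.map (Prod.swap_injective.comp SimpleGraph.Dart.toProd_injective)
  set T1 : Finset (V × V) := (q.darts.map SimpleGraph.Dart.toProd).toFinset with hT1
  set T2 : Finset (V × V) := (q.darts.map (fun d => d.toProd.swap)).toFinset with hT2
  have hdisj : Disjoint T1 T2 := by
    rw [Finset.disjoint_left]
    rintro p hp1 hp2
    simp only [hT1, hT2, List.mem_toFinset, List.mem_map] at hp1 hp2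
    obtain ⟨d, hd, rfl⟩ := hp1
    obtain ⟨d', hd', hdd⟩ := hp2
    have hedge : d'.edge = d.edge := by
      show s(d'.toProd.1, d'.toProd.2) = s(d.toProd.1, d.toProd.2)
      rw [← hdd]; exact Sym2.eq_swap
    have heq : d' = d := List.inj_on_of_nodup_map hnodupE hd' hd hedge
    subst heq
    have h2' : d'.toProd.2 = d'.toProd.1 := congrArg Prod.fst hdd
    exact d'.adj.ne h2'.symm
  have hT1card : T1.card = q.length := by
    rw [hT1, List.toFinset_card_of_nodup h1, List.length_map, SimpleGraph.Walk.length_darts]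
  have hT1sum : ∀ g : V × V → ℝ, ∑ p ∈ T1, g p = (q.darts.map (fun d => g d.toProd)).sum := by
    intro g
    rw [hT1, List.sum_toFinset _ h1, List.map_map]
    rfl
  have hT2sum : ∀ g : V × V → ℝ, ∑ p ∈ T2, g p = (q.darts.map (fun d => g d.toProd.swap)).sum := by
    intro g
    rw [hT2, List.sum_toFinset _ h2, List.map_map]
    rfl
  have hsum1 : ∑ p ∈ T1, (f p.1 - f p.2) = 1 := by
    rw [hT1sum (fun p => f p.1 - f p.2), walk_telescope q f, ha, hb]
    ring
  have hCS : (1:ℝ) ≤ (q.length : ℝ) * ∑ p ∈ T1, (f p.1 - f p.2) ^ 2 := by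
    have h := sq_sum_le_card_mul_sum_sq (s := T1) (f := fun p => f p.1 - f p.2)
    rw [hsum1, hT1card] at h
    norm_num at h
    exact h
  have e1 : ∑ p ∈ T1, gw G p.1 p.2 * (f p.1 - f p.2) ^ 2
      = ∑ p ∈ T1, (f p.1 - f p.2) ^ 2 := by
    apply Finset.sum_congr rfl
    intro p hp
    rw [hT1, List.mem_toFinset, List.mem_map] at hp
    obtain ⟨d, _, rfl⟩ := hp
    have hg : gw G d.toProd.1 d.toProd.2 = 1 := by unfold gw; rw [if_pos d.adj]
    rw [hg, one_mul]
  have e2 : ∑ p ∈ T2, gw G p.1 p.2 * (f p.1 - f p.2) ^ 2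
      = ∑ p ∈ T1, (f p.1 - f p.2) ^ 2 := by
    rw [hT2sum (fun p => gw G p.1 p.2 * (f p.1 - f p.2) ^ 2),
      hT1sum (fun p => (f p.1 - f p.2) ^ 2)]
    congr 1
    apply List.map_congr_left
    intro d _
    show gw G d.toProd.2 d.toProd.1 * (f d.toProd.2 - f d.toProd.1) ^ 2
      = (f d.toProd.1 - f d.toProd.2) ^ 2
    have hg : gw G d.toProd.2 d.toProd.1 = 1 := by unfold gw; rw [if_pos d.adj.symm]
    rw [hg, one_mul]; ring
  have hunion : ∑ p ∈ T1 ∪ T2, gw G p.1 p.2 * (f p.1 - f p.2) ^ 2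
      ≤ ∑ p ∈ (Finset.univ : Finset (V × V)), gw G p.1 p.2 * (f p.1 - f p.2) ^ 2 :=
    Finset.sum_le_sum_of_subset_of_nonneg (Finset.subset_univ _)
      (fun p _ _ => mul_nonneg (gw_nonneg G _ _) (sq_nonneg _))
  rw [Finset.sum_union hdisj, e1, e2] at hunion
  have huniv : ∑ p ∈ (Finset.univ : Finset (V × V)), gw G p.1 p.2 * (f p.1 - f p.2) ^ 2
      = ∑ x, ∑ y, gw G x y * (f x - f y) ^ 2 := by
    rw [← Finset.univ_product_univ, Finset.sum_product]
  have henergy : ∑ p ∈ T1, (f p.1 - f p.2) ^ 2 ≤ energy (gw G) f := by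
    unfold energy
    rw [← huniv]
    linarith
  have hS : 1 / (q.length : ℝ) ≤ ∑ p ∈ T1, (f p.1 - f p.2) ^ 2 := by
    rw [div_le_iff₀ (by exact_mod_cast hL0)]
    linarith
  calc 1 / ((Fintype.card V : ℝ) - 1) ≤ 1 / (q.length : ℝ) :=
        one_div_le_one_div_of_le (by exact_mod_cast hL0) hLcard
    _ ≤ ∑ p ∈ T1, (f p.1 - f p.2) ^ 2 := hS
    _ ≤ energy (gw G) f := henergy

lemma energy_delete (G : SimpleGraph V) {a b : V} (hab : G.Adj a b) (f : V → ℝ) :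
    energy (gw G) f = energy (gw (G.deleteEdges {s(a,b)})) f + (f a - f b) ^ 2 := by
  classical
  have hne : a ≠ b := hab.ne
  have hgw : ∀ x y, gw G x y = gw (G.deleteEdges {s(a,b)}) x y
      + (if x = a then (1:ℝ) else 0) * (if y = b then (1:ℝ) else 0)
      + (if x = b then (1:ℝ) else 0) * (if y = a then (1:ℝ) else 0) := by
    intro x y
    rcases Classical.em ((x = a ∧ y = b) ∨ (x = b ∧ y = a)) with h | h
    · have hd : s(x,y) = s(a,b) := by
        rcases h with ⟨rfl, rfl⟩ | ⟨rfl, rfl⟩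
        · rfl
        · exact Sym2.eq_swap
      rcases h with ⟨rfl, rfl⟩ | ⟨rfl, rfl⟩
      · simp [gw, hab, hne, Ne.symm hne, SimpleGraph.deleteEdges_adj, hd]
      · simp [gw, hab.symm, hne, Ne.symm hne, SimpleGraph.deleteEdges_adj, hd]
    · push_neg at h
      have hd : ¬ s(x,y) = s(a,b) := by
        rw [Sym2.eq_iff]
        tauto
      have e1 : (if x = a then (1:ℝ) else 0) * (if y = b then (1:ℝ) else 0) = 0 := by
        by_cases h1 : x = a <;> by_cases h2 : y = b <;> simp_all
      have e2 : (if x = b then (1:ℝ) else 0) * (if y = a then (1:ℝ) else 0) = 0 := by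
        by_cases h1 : x = b <;> by_cases h2 : y = a <;> simp_all
      simp [gw, SimpleGraph.deleteEdges_adj, hd, e1, e2]
  have ind1 : ∀ x, ∑ y, ((if x = a then (1:ℝ) else 0) * (if y = b then (1:ℝ) else 0)) * (f x - f y) ^ 2
      = (if x = a then (1:ℝ) else 0) * (f x - f b) ^ 2 := by
    intro x
    simp_rw [mul_assoc]
    rw [← Finset.mul_sum]
    congr 1
    simp [ite_mul, Finset.sum_ite_eq']
  have ind2 : ∀ x, ∑ y, ((if x = b then (1:ℝ) else 0) * (if y = a then (1:ℝ) else 0)) * (f x - f y) ^ 2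
      = (if x = b then (1:ℝ) else 0) * (f x - f a) ^ 2 := by
    intro x
    simp_rw [mul_assoc]
    rw [← Finset.mul_sum]
    congr 1
    simp [ite_mul, Finset.sum_ite_eq']
  have expand : ∑ x, ∑ y, gw G x y * (f x - f y) ^ 2
      = (∑ x, ∑ y, gw (G.deleteEdges {s(a,b)}) x y * (f x - f y) ^ 2)
        + (f a - f b) ^ 2 + (f b - f a) ^ 2 := by
    have : ∀ x y, gw G x y * (f x - f y) ^ 2
        = gw (G.deleteEdges {s(a,b)}) x y * (f x - f y) ^ 2
        + ((if x = a then (1:ℝ) else 0) * (if y = b then (1:ℝ) else 0)) * (f x - f y) ^ 2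
        + ((if x = b then (1:ℝ) else 0) * (if y = a then (1:ℝ) else 0)) * (f x - f y) ^ 2 := by
      intro x y
      rw [hgw x y]; ring
    simp_rw [this, Finset.sum_add_distrib, ind1, ind2]
    congr 1
    · congr 1
      simp [ite_mul, Finset.sum_ite_eq']
    · simp [ite_mul, Finset.sum_ite_eq']
  unfold energy
  rw [expand]
  ring

lemma sInf_delete (G : SimpleGraph V) {a b : V} (hab : G.Adj a b) :
    sInf (resSet (gw G) a b)
      = sInf (resSet (gw (G.deleteEdges {s(a,b)})) a b) + 1 := by
  have himg : resSet (gw G) a b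
      = (fun E => E + 1) '' resSet (gw (G.deleteEdges {s(a,b)})) a b := by
    ext E
    constructor
    · rintro ⟨f, h1, h0, rfl⟩
      refine ⟨energy (gw (G.deleteEdges {s(a,b)})) f, ⟨f, h1, h0, rfl⟩, ?_⟩
      rw [energy_delete G hab f, h1, h0]; ring
    · rintro ⟨E', ⟨f, h1, h0, rfl⟩, rfl⟩
      refine ⟨f, h1, h0, ?_⟩
      rw [energy_delete G hab f, h1, h0]; ring
  rw [himg]
  have h := (OrderIso.addRight (1:ℝ)).map_csInf'
    (s := resSet (gw (G.deleteEdges {s(a,b)})) a b)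
    (resSet_nonempty hab.ne _) (resSet_bddBelow _ a b)
  simp only [OrderIso.addRight_apply] at h
  rw [← h]

lemma main_ineq {C t : ℝ} (ht : 0 < t) (hC : t ≤ C) :
    1 / C - 1 / (C + 1) ≤ 1 / t - 1 / (t + 1) := by
  have hC0 : 0 < C := lt_of_lt_of_le ht hC
  have h1 : 1 / C - 1 / (C + 1) = 1 / (C * (C + 1)) := by
    field_simp
    ring
  have h2 : 1 / t - 1 / (t + 1) = 1 / (t * (t + 1)) := by
    field_simp
    ring
  rw [h1, h2]
  apply one_div_le_one_div_of_le (by positivity)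
  nlinarith

end Aux

section Cycle

open SimpleGraph
open scoped Fin.NatCast Fin.CommRing

lemma fin_val_one {n : ℕ} [NeZero n] (hn : 3 ≤ n) : (1 : Fin n).val = 1 := by
  rw [Fin.val_one', Nat.mod_eq_of_lt (by omega)]

lemma fin_val_add_one {n : ℕ} [NeZero n] (hn : 3 ≤ n) (u : Fin n) :
    (u + 1).val = if u.val = n - 1 then 0 else u.val + 1 := by
  have hv : (u + 1).val = (u.val + 1) % n := by
    simp [Fin.add_def, fin_val_one hn]
  rw [hv]
  rcases eq_or_ne u.val (n-1) with h | h
  · rw [if_pos h, h, Nat.sub_add_cancel (by omega), Nat.mod_self]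
  · rw [if_neg h, Nat.mod_eq_of_lt (by omega)]

lemma fin_add_two_ne {n : ℕ} [NeZero n] (hn : 3 ≤ n) (u : Fin n) : u + 1 + 1 ≠ u := by
  intro h
  rw [Fin.ext_iff, fin_val_add_one hn (u+1), fin_val_add_one hn u] at h
  split_ifs at h <;> omega

lemma fin_add_one_ne {n : ℕ} [NeZero n] (hn : 3 ≤ n) (u : Fin n) : u + 1 ≠ u := by
  intro h
  rw [Fin.ext_iff, fin_val_add_one hn u] at h
  split_ifs at h <;> omega

lemma fin_sub_val_one {n : ℕ} [NeZero n] (hn : 3 ≤ n) (u v : Fin n) :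
    (u - v).val = 1 ↔ u = v + 1 := by
  constructor
  · intro h
    have huv : u - v = 1 := by
      apply Fin.ext; rw [fin_val_one hn, h]
    rw [← huv, add_comm, sub_add_cancel]
  · rintro rfl
    have h : v + 1 - v = 1 := by
      rw [add_comm, add_sub_cancel_right]
    rw [h, fin_val_one hn]

lemma fin_neg_one {n : ℕ} [NeZero n] (hn : 3 ≤ n) : ((n - 1 : ℕ) : Fin n) = -1 := by
  apply Fin.ext
  rw [Fin.val_natCast, Fin.coe_neg, Fin.val_one',
    Nat.mod_eq_of_lt (show 1 < n by omega)]

lemma cycle_del_adj {n : ℕ} [NeZero n] (hn : 3 ≤ n) (a x y : Fin n) :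
    ((cycleGraph n).deleteEdges {s(a, a+1)}).Adj x y ↔
      ((y = x + 1 ∧ x ≠ a) ∨ (x = y + 1 ∧ y ≠ a)) := by
  have htwo := fin_add_two_ne hn
  have hsub := fin_sub_val_one hn
  rw [SimpleGraph.deleteEdges_adj, SimpleGraph.cycleGraph_adj',
    Set.mem_singleton_iff, Sym2.eq_iff, hsub x y, hsub y x]
  constructor
  · rintro ⟨h1 | h1, h2⟩
    · right
      refine ⟨h1, ?_⟩
      rintro rfl
      exact h2 (Or.inr ⟨h1, rfl⟩)
    · left
      refine ⟨h1, ?_⟩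
      rintro rfl
      exact h2 (Or.inl ⟨rfl, h1⟩)
  · rintro (⟨rfl, hxa⟩ | ⟨rfl, hya⟩)
    · refine ⟨Or.inr rfl, ?_⟩
      rintro (⟨rfl, h⟩ | ⟨rfl, h⟩)
      · exact hxa rfl
      · exact htwo a h
    · refine ⟨Or.inl rfl, ?_⟩
      rintro (⟨h, rfl⟩ | ⟨h, rfl⟩)
      · exact htwo a h
      · exact hya rfl

lemma cycle_del_reachable {n : ℕ} [NeZero n] (hn : 3 ≤ n) (a : Fin n) :
    ((cycleGraph n).deleteEdges {s(a, a+1)}).Reachable a (a+1) := by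
  have hneg1 : ((n - 1 : ℕ) : Fin n) = -1 := fin_neg_one hn
  have key : ∀ k : ℕ, k ≤ n - 1 →
      ((cycleGraph n).deleteEdges {s(a, a+1)}).Reachable (a + 1 + (k : Fin n)) (a + 1) := by
    intro k
    induction k with
    | zero => intro _; simpa using SimpleGraph.Reachable.refl (a+1)
    | succ k ih =>
      intro hk
      have hadj : ((cycleGraph n).deleteEdges {s(a, a+1)}).Adj
          (a + 1 + ((k+1 : ℕ) : Fin n)) (a + 1 + (k : Fin n)) := by
        rw [cycle_del_adj hn]
        right
        constructor
        · push_cast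
          ring
        · intro h
          have h2 : (1 : Fin n) + (k : Fin n) = 0 := by
            have h' : a + ((1 : Fin n) + (k : Fin n)) = a + 0 := by
              rw [add_zero, ← add_assoc]; exact h
            exact add_left_cancel h'
          have h3 : ((k : ℕ) : Fin n) = -1 := eq_neg_of_add_eq_zero_right h2
          have h4 : (k : ℕ) % n = (n - 1) % n := by
            have := congrArg Fin.val (h3.trans hneg1.symm)
            rw [Fin.val_natCast, Fin.val_natCast] at this
            exact this
          have h5 : (k : ℕ) % n = k := Nat.mod_eq_of_lt (by omega)
          have h6 : (n - 1) % n = n - 1 := Nat.mod_eq_of_lt (by omega)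
          omega
      exact hadj.reachable.trans (ih (by omega))
  have ha : a = a + 1 + ((n - 1 : ℕ) : Fin n) := by
    rw [hneg1]; ring
  have := key (n-1) le_rfl
  rwa [← ha] at this

lemma cycle_energy {n : ℕ} [NeZero n] (hn : 3 ≤ n) (a : Fin n) :
    energy (gw ((cycleGraph n).deleteEdges {s(a, a+1)}))
      (fun x => (((x - (a+1)).val : ℕ) : ℝ) / ((n:ℝ) - 1)) = 1 / ((n:ℝ) - 1) := by
  classical
  have hn3 : (3:ℝ) ≤ (n:ℝ) := by exact_mod_cast hn
  have hn1 : ((n:ℝ) - 1) ≠ 0 := ne_of_gt (by linarith)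
  set b := a + 1 with hb
  set g : Fin n → ℝ := fun x => (((x - b).val : ℕ) : ℝ) / ((n:ℝ) - 1) with hg
  have hstep : ∀ x : Fin n, x ≠ a → g (x + 1) - g x = 1 / ((n:ℝ)-1) := by
    intro x hxa
    have h1 : (x + 1 - b) = (x - b) + 1 := by rw [hb]; ring
    have h2 : (x - b).val ≠ n - 1 := by
      intro h
      apply hxa
      have e1 : x - b = ((n-1 : ℕ) : Fin n) := by
        apply Fin.ext
        rw [Fin.val_natCast, Nat.mod_eq_of_lt (by omega), h]
      have e2 : x - b = -1 := e1.trans (fin_neg_one hn)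
      have e3 : x = b + -1 := by rw [← e2]; ring
      rw [e3, hb]; ring
    have h3 : (x + 1 - b).val = (x - b).val + 1 := by
      rw [h1, fin_val_add_one hn, if_neg h2]
    show (((x + 1 - b).val : ℕ) : ℝ) / ((n:ℝ) - 1) - (((x - b).val : ℕ) : ℝ) / ((n:ℝ) - 1)
      = 1 / ((n:ℝ)-1)
    rw [h3]
    push_cast
    field_simp
    ring
  have hgw : ∀ x y : Fin n, gw ((cycleGraph n).deleteEdges {s(a, b)}) x y
      = (if x ≠ a ∧ y = x + 1 then (1:ℝ) else 0)
        + (if y ≠ a ∧ x = y + 1 then (1:ℝ) else 0) := by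
    intro x y
    unfold gw
    by_cases hA : ((cycleGraph n).deleteEdges {s(a, b)}).Adj x y
    · rw [if_pos hA]
      rw [hb, cycle_del_adj hn] at hA
      rcases hA with ⟨h1, h2⟩ | ⟨h1, h2⟩
      · have hnB : ¬(y ≠ a ∧ x = y + 1) := by
          rintro ⟨h3, h4⟩
          rw [h1] at h4
          exact fin_add_two_ne hn x h4.symm
        rw [if_pos (show x ≠ a ∧ y = x + 1 from ⟨h2, h1⟩), if_neg hnB, add_zero]
      · have hnA : ¬(x ≠ a ∧ y = x + 1) := by
          rintro ⟨h3, h4⟩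
          rw [h1] at h4
          exact fin_add_two_ne hn y h4.symm
        rw [if_neg hnA, if_pos (show y ≠ a ∧ x = y + 1 from ⟨h2, h1⟩), zero_add]
    · rw [if_neg hA]
      rw [hb, cycle_del_adj hn] at hA
      have hnA : ¬(x ≠ a ∧ y = x + 1) := by
        rintro ⟨h1, h2⟩; exact hA (Or.inl ⟨h2, h1⟩)
      have hnB : ¬(y ≠ a ∧ x = y + 1) := by
        rintro ⟨h1, h2⟩; exact hA (Or.inr ⟨h2, h1⟩)
      rw [if_neg hnA, if_neg hnB, add_zero]
  show energy (gw ((cycleGraph n).deleteEdges {s(a, b)})) g = 1 / ((n:ℝ) - 1)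
  unfold energy
  have hsum : ∑ x, ∑ y, gw ((cycleGraph n).deleteEdges {s(a, b)}) x y * (g x - g y) ^ 2
      = (∑ x, if x ≠ a then (g x - g (x+1)) ^ 2 else 0)
        + (∑ y, if y ≠ a then (g (y+1) - g y) ^ 2 else 0) := by
    simp_rw [hgw, add_mul, Finset.sum_add_distrib]
    congr 1
    · apply Finset.sum_congr rfl
      intro x _
      by_cases hx : x = a
      · simp [hx]
      · have hpt : ∀ y, (if x ≠ a ∧ y = x + 1 then (1:ℝ) else 0) * (g x - g y) ^ 2
            = if y = x + 1 then (g x - g y) ^ 2 else 0 := by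
          intro y
          by_cases hy : y = x + 1 <;> simp [hx, hy]
        simp_rw [hpt]
        rw [Finset.sum_ite_eq' Finset.univ (x+1) (fun y => (g x - g y) ^ 2)]
        simp [hx]
    · rw [Finset.sum_comm]
      apply Finset.sum_congr rfl
      intro y _
      by_cases hy : y = a
      · simp [hy]
      · have hpt : ∀ x, (if y ≠ a ∧ x = y + 1 then (1:ℝ) else 0) * (g x - g y) ^ 2
            = if x = y + 1 then (g x - g y) ^ 2 else 0 := by
          intro x
          by_cases hx : x = y + 1 <;> simp [hy, hx]
        simp_rw [hpt]
        rw [Finset.sum_ite_eq' Finset.univ (y+1) (fun x => (g x - g y) ^ 2)]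
        simp [hy]
  rw [hsum]
  have hsym : ∑ y : Fin n, (if y ≠ a then (g (y+1) - g y) ^ 2 else 0)
      = ∑ x : Fin n, (if x ≠ a then (g x - g (x+1)) ^ 2 else 0) := by
    apply Finset.sum_congr rfl
    intro x _
    by_cases hx : x = a
    · simp [hx]
    · simp only [hx, ne_eq, not_false_eq_true, if_true]
      ring
  rw [hsym]
  have hterm : ∀ x : Fin n, (if x ≠ a then (g x - g (x+1)) ^ 2 else 0)
      = if x ≠ a then (1/((n:ℝ)-1)) ^ 2 else 0 := by
    intro x
    by_cases hx : x = a
    · simp [hx]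
    · simp only [hx, ne_eq, not_false_eq_true, if_true]
      rw [show g x - g (x+1) = -(g (x+1) - g x) by ring, hstep x hx]
      ring
  simp_rw [hterm]
  rw [Finset.sum_ite, Finset.sum_const, Finset.sum_const, Finset.filter_ne',
    Finset.card_erase_of_mem (Finset.mem_univ a)]
  simp only [Finset.card_univ, Fintype.card_fin, smul_zero, add_zero, nsmul_eq_mul]
  have hcast : ((n - 1 : ℕ) : ℝ) = (n:ℝ) - 1 := by
    rw [Nat.cast_sub (by omega)]
    norm_num
  rw [hcast]
  field_simp
  ring

lemma cycle_sInf {n : ℕ} [NeZero n] (hn : 3 ≤ n) (a : Fin n) :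
    sInf (resSet (gw ((cycleGraph n).deleteEdges {s(a, a+1)})) a (a+1)) = 1 / ((n:ℝ)-1) := by
  have hn3 : (3:ℝ) ≤ (n:ℝ) := by exact_mod_cast hn
  have hn1 : ((n:ℝ) - 1) ≠ 0 := ne_of_gt (by linarith)
  have hne : a ≠ a + 1 := fun h => fin_add_one_ne hn a h.symm
  apply le_antisymm
  · apply csInf_le (resSet_bddBelow _ _ _)
    refine ⟨fun x => (((x - (a+1)).val : ℕ) : ℝ) / ((n:ℝ) - 1), ?_, ?_, (cycle_energy hn a).symm⟩
    · have hval : ((a - (a+1) : Fin n)).val = n - 1 := by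
        have e1 : a - (a+1) = ((n-1:ℕ) : Fin n) := by rw [fin_neg_one hn]; ring
        rw [e1, Fin.val_natCast, Nat.mod_eq_of_lt (by omega)]
      simp only [hval]
      rw [Nat.cast_sub (by omega)]
      push_cast
      field_simp
    · simp
  · apply le_csInf (resSet_nonempty hne _)
    rintro E ⟨f, h1, h0, rfl⟩
    have h := energy_lower _ (cycle_del_reachable hn a) h1 h0
    rwa [Fintype.card_fin] at h

lemma cycle_final {n : ℕ} [NeZero n] (hn : 3 ≤ n) (a : Fin n) :
    effRes (gw ((cycleGraph n).deleteEdges {s(a, a+1)})) a (a+1)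
      - effRes (gw (cycleGraph n)) a (a+1) = ((n:ℝ)-1) ^ 2 / n := by
  have hn3 : (3:ℝ) ≤ (n:ℝ) := by exact_mod_cast hn
  have hn1 : ((n:ℝ) - 1) ≠ 0 := ne_of_gt (by linarith)
  have hn0 : (n:ℝ) ≠ 0 := ne_of_gt (by linarith)
  have hadj : (cycleGraph n).Adj a (a+1) := by
    rw [cycleGraph_adj']
    right
    rw [fin_sub_val_one hn]
  rw [effRes_def, effRes_def, sInf_delete _ hadj, cycle_sInf hn a, one_div_one_div]
  have h2 : 1/((n:ℝ)-1) + 1 = n / ((n:ℝ)-1) := by field_simp; ring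
  rw [h2, one_div_div]
  field_simp

end Cycle

/-- Over all connected graphs on `n` vertices in which the edge `ab` is not a
cut-edge, the increase `R'_{ab} - R_{ab}` of effective resistance upon deleting
the edge `ab` is at most `(n-1)^2/n`, with equality attained by the `n`-cycle. -/
theorem effRes_increase_max (n : ℕ) (hn : 3 ≤ n) :
    (∀ (V : Type) [Fintype V], Fintype.card V = n →
      ∀ (G : SimpleGraph V), G.Connected → ∀ a b : V, G.Adj a b →
        (G.deleteEdges {s(a, b)}).Connected →
        effRes (gw (G.deleteEdges {s(a, b)})) a b - effRes (gw G) a b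
          ≤ ((n : ℝ) - 1) ^ 2 / n) ∧
    (∀ a b : Fin n, (SimpleGraph.cycleGraph n).Adj a b →
      effRes (gw ((SimpleGraph.cycleGraph n).deleteEdges {s(a, b)})) a b
        - effRes (gw (SimpleGraph.cycleGraph n)) a b = ((n : ℝ) - 1) ^ 2 / n) := by
  have hn3 : (3:ℝ) ≤ (n:ℝ) := by exact_mod_cast hn
  haveI : NeZero n := ⟨by omega⟩
  constructor
  · intro V _ hcard G hconn a b hab hconn'
    have hne := hab.ne
    have hlow : 1 / ((n:ℝ) - 1) ≤ sInf (resSet (gw (G.deleteEdges {s(a,b)})) a b) := by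
      apply le_csInf (resSet_nonempty hne _)
      rintro E ⟨f, h1, h0, rfl⟩
      have h := energy_lower _ (hconn'.preconnected a b) h1 h0
      rwa [hcard] at h
    have ht : (0:ℝ) < 1 / ((n:ℝ)-1) := by
      have : (0:ℝ) < (n:ℝ) - 1 := by linarith
      positivity
    rw [effRes_def, effRes_def, sInf_delete G hab]
    have key := main_ineq ht hlow
    have harith : 1 / (1/((n:ℝ)-1)) - 1 / (1/((n:ℝ)-1) + 1) = ((n:ℝ)-1) ^ 2 / n := by
      have hn1 : ((n:ℝ) - 1) ≠ 0 := ne_of_gt (by linarith)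
      have hn0 : (n:ℝ) ≠ 0 := ne_of_gt (by linarith)
      rw [one_div_one_div]
      have h2 : 1/((n:ℝ)-1) + 1 = n / ((n:ℝ)-1) := by field_simp; ring
      rw [h2, one_div_div]
      field_simp
    exact le_trans key harith.le
  · intro a b hadj
    rw [SimpleGraph.cycleGraph_adj'] at hadj
    rcases hadj with h | h
    · rw [fin_sub_val_one hn] at h
      subst h
      have hedge : s(b + 1, b) = s(b, b + 1) := Sym2.eq_swap
      rw [hedge, effRes_def, effRes_def, resSet_symm _ (b+1) b, resSet_symm _ (b+1) b,
        ← effRes_def, ← effRes_def]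
      exact cycle_final hn b
    · rw [fin_sub_val_one hn] at h
      subst h
      exact cycle_final hn a
end

section
/- For a regular edge-transitive graph G, the effective resistance across any edge ab (with unit edge resistances) equals (|V| - 1)/|E|. -/
open Finset

section Aux
open Matrix
set_option linter.unusedSectionVars false
variable {V : Type*} [Fintype V] [DecidableEq V]

noncomputable def Jmat (V : Type*) [Fintype V] : Matrix V V ℝ := Matrix.of fun _ _ => (1:ℝ)

variable (G : SimpleGraph V) [DecidableRel G.Adj]

noncomputable def Nmat : Matrix V V ℝ :=
  G.lapMatrix ℝ + ((Fintype.card V : ℝ))⁻¹ • Jmat V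

noncomputable def Lplus : Matrix V V ℝ :=
  (Nmat G)⁻¹ - ((Fintype.card V : ℝ))⁻¹ • Jmat V

def uvec (a b : V) : V → ℝ := fun x => (if x = a then 1 else 0) - (if x = b then 1 else 0)

noncomputable def rmat (a b : V) : ℝ := uvec a b ⬝ᵥ ((Lplus G) *ᵥ uvec a b)

lemma Jmat_transpose : (Jmat V)ᵀ = Jmat V := by ext x y; simp [Jmat]

lemma lapT : (G.lapMatrix ℝ)ᵀ = G.lapMatrix ℝ := by
  have := G.isSymm_lapMatrix (R := ℝ); rwa [Matrix.IsSymm] at this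

lemma lap_mul_J : G.lapMatrix ℝ * Jmat V = 0 := by
  ext x y
  have h := congrFun (G.lapMatrix_mulVec_const_eq_zero (R := ℝ)) x
  simp only [mulVec, dotProduct, mul_one] at h
  simpa [Matrix.mul_apply, Jmat] using h

lemma J_mul_lap : Jmat V * G.lapMatrix ℝ = 0 := by
  calc Jmat V * G.lapMatrix ℝ = ((G.lapMatrix ℝ)ᵀ * (Jmat V)ᵀ)ᵀ := by
        rw [← Matrix.transpose_mul, Matrix.transpose_transpose]
    _ = 0 := by rw [lapT, Jmat_transpose, lap_mul_J]; simp

lemma J_mul_J : Jmat V * Jmat V = (Fintype.card V : ℝ) • Jmat V := by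
  ext x y; simp [Jmat, Matrix.mul_apply, Finset.card_univ]

lemma trace_J : (Jmat V).trace = (Fintype.card V : ℝ) := by
  simp [Matrix.trace, Jmat, Matrix.diag, Finset.card_univ]

lemma NmatT : (Nmat G)ᵀ = Nmat G := by
  simp [Nmat, Matrix.transpose_add, Matrix.transpose_smul, lapT, Jmat_transpose]

-- quadratic form
lemma dot_lap_eq (x : V → ℝ) :
    x ⬝ᵥ (G.lapMatrix ℝ *ᵥ x) =
      (∑ i : V, ∑ j : V, if G.Adj i j then (x i - x j)^2 else 0) / 2 := by
  rw [← G.lapMatrix_toLinearMap₂' (R := ℝ), Matrix.toLinearMap₂'_apply']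

lemma dot_lap_nonneg (x : V → ℝ) : 0 ≤ x ⬝ᵥ (G.lapMatrix ℝ *ᵥ x) := by
  have h := (SimpleGraph.posSemidef_lapMatrix ℝ G).dotProduct_mulVec_nonneg x
  simpa using h

lemma dot_J (x : V → ℝ) : x ⬝ᵥ (Jmat V *ᵥ x) = (∑ i, x i)^2 := by
  simp [Jmat, mulVec, dotProduct, ← Finset.sum_mul, ← Finset.mul_sum, sq, mul_comm]

lemma energy_eq (f : V → ℝ) : energy (gw G) f = f ⬝ᵥ (G.lapMatrix ℝ *ᵥ f) := by
  rw [dot_lap_eq, energy]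
  have h : ∑ x, ∑ y, gw G x y * (f x - f y) ^ 2
      = ∑ i : V, ∑ j : V, if G.Adj i j then (f i - f j)^2 else 0 := by
    refine Finset.sum_congr rfl fun x _ => Finset.sum_congr rfl fun y _ => ?_
    by_cases h : G.Adj x y <;> simp [gw, h]
  rw [h]; ring

lemma card_ne (hV : Nonempty V) : (Fintype.card V : ℝ) ≠ 0 := by
  have : 0 < Fintype.card V := Fintype.card_pos
  positivity

lemma nmat_posDef (hconn : G.Connected) : (Nmat G).PosDef := by
  have hV : Nonempty V := hconn.nonempty
  have hcard : (0:ℝ) < Fintype.card V := by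
    have : 0 < Fintype.card V := Fintype.card_pos
    exact_mod_cast this
  refine Matrix.posDef_iff_dotProduct_mulVec.mpr ⟨?_, ?_⟩
  · rw [Matrix.IsHermitian, Matrix.conjTranspose_eq_transpose_of_trivial, NmatT]
  · intro x hx
    rw [star_trivial]
    have hexp : x ⬝ᵥ (Nmat G *ᵥ x)
        = x ⬝ᵥ (G.lapMatrix ℝ *ᵥ x) + (Fintype.card V : ℝ)⁻¹ * (∑ i, x i)^2 := by
      rw [Nmat, Matrix.add_mulVec, Matrix.smul_mulVec, dotProduct_add,
        dotProduct_smul, smul_eq_mul, dot_J]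
    rw [hexp]
    rcases (dot_lap_nonneg G x).lt_or_eq with hq | hq
    · have h2 : 0 ≤ (Fintype.card V : ℝ)⁻¹ * (∑ i, x i)^2 := by positivity
      linarith
    · have hconst : ∀ i j : V, x i = x j := by
        have h0 : Matrix.toLinearMap₂' ℝ (G.lapMatrix ℝ) x x = 0 := by
          rw [Matrix.toLinearMap₂'_apply']; exact hq.symm
        have h1 := (G.lapMatrix_toLinearMap₂'_apply'_eq_zero_iff_forall_reachable x).1 h0
        exact fun i j => h1 i j (hconn.preconnected i j)
      obtain ⟨v⟩ := hV
      have hxv : x v ≠ 0 := by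
        intro h0
        exact hx (funext fun i => by rw [hconst i v, h0]; rfl)
      have hsum : ∑ i, x i = (Fintype.card V : ℝ) * x v := by
        rw [Finset.sum_congr rfl (fun i _ => hconst i v), Finset.sum_const,
          Finset.card_univ, nsmul_eq_mul]
      rw [← hq, hsum, zero_add]
      have hne : (Fintype.card V : ℝ) * x v ≠ 0 := mul_ne_zero (ne_of_gt hcard) hxv
      have := (sq_nonneg ((Fintype.card V : ℝ) * x v)).lt_of_ne' (pow_ne_zero 2 hne)
      positivity

lemma nmat_det_unit (hconn : G.Connected) : IsUnit (Nmat G).det :=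
  ((nmat_posDef G hconn).det_pos).ne'.isUnit

lemma nmat_mul_inv (hconn : G.Connected) : Nmat G * (Nmat G)⁻¹ = 1 :=
  Matrix.mul_nonsing_inv _ (nmat_det_unit G hconn)

lemma inv_mul_nmat (hconn : G.Connected) : (Nmat G)⁻¹ * Nmat G = 1 :=
  Matrix.nonsing_inv_mul _ (nmat_det_unit G hconn)

lemma J_mul_nmat (hV : Nonempty V) : Jmat V * Nmat G = Jmat V := by
  rw [Nmat, Matrix.mul_add, J_mul_lap, Matrix.mul_smul, J_mul_J, smul_smul,
    inv_mul_cancel₀ (card_ne hV), one_smul, zero_add]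

lemma nmat_mul_J (hV : Nonempty V) : Nmat G * Jmat V = Jmat V := by
  rw [Nmat, Matrix.add_mul, lap_mul_J, Matrix.smul_mul, J_mul_J, smul_smul,
    inv_mul_cancel₀ (card_ne hV), one_smul, zero_add]

lemma J_mul_inv (hconn : G.Connected) : Jmat V * (Nmat G)⁻¹ = Jmat V := by
  calc Jmat V * (Nmat G)⁻¹ = (Jmat V * Nmat G) * (Nmat G)⁻¹ := by
        rw [J_mul_nmat G hconn.nonempty]
    _ = Jmat V * (Nmat G * (Nmat G)⁻¹) := by rw [Matrix.mul_assoc]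
    _ = Jmat V := by rw [nmat_mul_inv G hconn, Matrix.mul_one]

lemma inv_mul_J (hconn : G.Connected) : (Nmat G)⁻¹ * Jmat V = Jmat V := by
  calc (Nmat G)⁻¹ * Jmat V = (Nmat G)⁻¹ * (Nmat G * Jmat V) := by
        rw [nmat_mul_J G hconn.nonempty]
    _ = ((Nmat G)⁻¹ * Nmat G) * Jmat V := by rw [Matrix.mul_assoc]
    _ = Jmat V := by rw [inv_mul_nmat G hconn, Matrix.one_mul]

lemma invT (hconn : G.Connected) : ((Nmat G)⁻¹)ᵀ = (Nmat G)⁻¹ := by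
  rw [Matrix.transpose_nonsing_inv, NmatT]

lemma LplusT (hconn : G.Connected) : (Lplus G)ᵀ = Lplus G := by
  rw [Lplus, Matrix.transpose_sub, Matrix.transpose_smul, invT G hconn, Jmat_transpose]

lemma lap_eq_nmat_sub : G.lapMatrix ℝ = Nmat G - (Fintype.card V : ℝ)⁻¹ • Jmat V := by
  rw [Nmat, add_sub_cancel_right]

lemma lap_mul_lplus (hconn : G.Connected) :
    G.lapMatrix ℝ * Lplus G = 1 - (Fintype.card V : ℝ)⁻¹ • Jmat V := by
  rw [Lplus, Matrix.mul_sub, Matrix.mul_smul, lap_mul_J, smul_zero, sub_zero,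
    lap_eq_nmat_sub, Matrix.sub_mul, Matrix.smul_mul, J_mul_inv G hconn, nmat_mul_inv G hconn]

lemma lplus_mul_lap (hconn : G.Connected) :
    Lplus G * G.lapMatrix ℝ = 1 - (Fintype.card V : ℝ)⁻¹ • Jmat V := by
  rw [Lplus, Matrix.sub_mul, Matrix.smul_mul, J_mul_lap, smul_zero, sub_zero,
    lap_eq_nmat_sub, Matrix.mul_sub, Matrix.mul_smul, inv_mul_J G hconn, inv_mul_nmat G hconn]

lemma dot_symm (A : Matrix V V ℝ) (hA : Aᵀ = A) (x y : V → ℝ) :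
    x ⬝ᵥ (A *ᵥ y) = y ⬝ᵥ (A *ᵥ x) := by
  rw [Matrix.dotProduct_mulVec]
  conv_lhs => rw [← hA, Matrix.vecMul_transpose]
  rw [dotProduct_comm]

lemma lap_CS (f g : V → ℝ) :
    (g ⬝ᵥ (G.lapMatrix ℝ *ᵥ f))^2
      ≤ (g ⬝ᵥ (G.lapMatrix ℝ *ᵥ g)) * (f ⬝ᵥ (G.lapMatrix ℝ *ᵥ f)) := by
  set L := G.lapMatrix ℝ with hLdef
  have hsym : f ⬝ᵥ (L *ᵥ g) = g ⬝ᵥ (L *ᵥ f) := dot_symm (A := L) (lapT G) f g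
  have key : ∀ t : ℝ,
      0 ≤ (g ⬝ᵥ (L *ᵥ g)) * (t*t) + (2 * (g ⬝ᵥ (L *ᵥ f))) * t + f ⬝ᵥ (L *ᵥ f) := by
    intro t
    have h := dot_lap_nonneg G (f + t • g)
    have hexpand : (f + t • g) ⬝ᵥ (L *ᵥ (f + t • g))
        = (g ⬝ᵥ (L *ᵥ g)) * (t*t) + (2 * (g ⬝ᵥ (L *ᵥ f))) * t + f ⬝ᵥ (L *ᵥ f) := by
      rw [Matrix.mulVec_add, Matrix.mulVec_smul, dotProduct_add, add_dotProduct,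
        add_dotProduct, dotProduct_smul, dotProduct_smul, smul_dotProduct, smul_dotProduct,
        smul_eq_mul, smul_eq_mul, smul_eq_mul, hsym, smul_eq_mul]
      ring
    rw [← hexpand]; exact h
  have hd := discrim_le_zero key
  rw [discrim] at hd
  nlinarith [hd]


lemma uvec_dot (a b : V) (f : V → ℝ) : uvec a b ⬝ᵥ f = f a - f b := by
  simp [uvec, dotProduct, sub_mul, Finset.sum_sub_distrib, ite_mul]

lemma J_mulVec_uvec {a b : V} (hne : a ≠ b) : Jmat V *ᵥ uvec a b = 0 := by
  ext z
  simp [Jmat, mulVec, dotProduct, uvec, Finset.sum_sub_distrib]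

lemma lap_mulVec_g (hconn : G.Connected) {a b : V} (hne : a ≠ b) :
    G.lapMatrix ℝ *ᵥ (Lplus G *ᵥ uvec a b) = uvec a b := by
  rw [Matrix.mulVec_mulVec, lap_mul_lplus G hconn, Matrix.sub_mulVec,
    Matrix.one_mulVec, Matrix.smul_mulVec, J_mulVec_uvec hne, smul_zero, sub_zero]

lemma energy_affine (c : V → V → ℝ) (f : V → ℝ) (s t : ℝ) :
    energy c (fun x => s * f x + t) = s^2 * energy c f := by
  unfold energy
  have h1 : ∑ x, ∑ y, c x y * ((fun x => s * f x + t) x - (fun x => s * f x + t) y) ^ 2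
      = ∑ x, ∑ y, s^2 * (c x y * (f x - f y)^2) := by
    refine Finset.sum_congr rfl fun x _ => Finset.sum_congr rfl fun y _ => ?_
    show c x y * ((s * f x + t) - (s * f y + t))^2 = s^2 * (c x y * (f x - f y)^2)
    ring
  rw [h1]
  simp only [← Finset.mul_sum]
  ring

lemma rmat_main (hconn : G.Connected) (a b : V) (hne : a ≠ b) :
    0 < rmat G a b ∧
    IsLeast {E : ℝ | ∃ f : V → ℝ, f a = 1 ∧ f b = 0 ∧ E = energy (gw G) f}
      (rmat G a b)⁻¹ := by
  set L := G.lapMatrix ℝ with hLdef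
  set u := uvec a b with hu
  set g : V → ℝ := Lplus G *ᵥ u with hg
  set R := rmat G a b with hR
  have hLg : L *ᵥ g = u := lap_mulVec_g G hconn hne
  have hgLg : g ⬝ᵥ (L *ᵥ g) = R := by
    rw [hLg, dotProduct_comm]; rfl
  have hbound : ∀ f : V → ℝ, f a = 1 → f b = 0 → 1 ≤ R * (f ⬝ᵥ (L *ᵥ f)) := by
    intro f hfa hfb
    have h1 : g ⬝ᵥ (L *ᵥ f) = 1 := by
      rw [dot_symm (A := L) (lapT G) g f, hLg, dotProduct_comm, hu, uvec_dot, hfa, hfb,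
        sub_zero]
    have := lap_CS G f g
    rw [h1, hgLg] at this
    simpa using this
  have hRpos : 0 < R := by
    set f₀ : V → ℝ := fun x => if x = a then 1 else 0 with hf₀
    have h1 := hbound f₀ (by simp [hf₀]) (by simp [hf₀, hne.symm])
    have h2 : 0 ≤ f₀ ⬝ᵥ (L *ᵥ f₀) := dot_lap_nonneg G f₀
    nlinarith
  refine ⟨hRpos, ?_, ?_⟩
  · -- membership: the harmonic minimizer
    refine ⟨fun x => R⁻¹ * (g x - g b), ?_, ?_, ?_⟩
    · have hga : g a - g b = R := by
        have : u ⬝ᵥ g = g a - g b := uvec_dot a b g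
        rw [← this]; rfl
      show R⁻¹ * (g a - g b) = 1
      rw [hga, inv_mul_cancel₀ hRpos.ne']
    · simp
    · have hfun : (fun x => R⁻¹ * (g x - g b)) = fun x => R⁻¹ * g x + (-(R⁻¹ * g b)) := by
        funext x; ring
      rw [hfun, energy_affine, energy_eq, hgLg]
      rw [sq]
      field_simp
  · rintro E ⟨f, hfa, hfb, rfl⟩
    have h := hbound f hfa hfb
    rw [energy_eq]
    rw [inv_le_iff_one_le_mul₀ hRpos]
    linarith

lemma effRes_eq_rmat (hconn : G.Connected) {a b : V} (hne : a ≠ b) :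
    effRes (gw G) a b = rmat G a b := by
  obtain ⟨hpos, hleast⟩ := rmat_main G hconn a b hne
  rw [effRes, hleast.csInf_eq, one_div, inv_inv]


lemma gw_symm (x y : V) : gw G x y = gw G y x := by
  simp [gw, SimpleGraph.adj_comm]

lemma gw_row_sum {d : ℕ} (hreg : G.IsRegularOfDegree d) (x : V) :
    ∑ y, gw G x y = (d : ℝ) := by
  have h : (G.degree x : ℝ) = ∑ j : V, if G.Adj x j then 1 else 0 :=
    SimpleGraph.degree_eq_sum_if_adj G x
  rw [show ∑ y, gw G x y = ∑ j : V, if G.Adj x j then (1:ℝ) else 0 from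
    Finset.sum_congr rfl fun y _ => by by_cases hxy : G.Adj x y <;> simp [gw, hxy]]
  rw [← h, hreg x]

lemma lap_entry {d : ℕ} (hreg : G.IsRegularOfDegree d) (x z : V) :
    G.lapMatrix ℝ x z = (if x = z then (d:ℝ) else 0) - gw G x z := by
  by_cases hxz : G.Adj x z <;>
    simp [SimpleGraph.lapMatrix, SimpleGraph.degMatrix, Matrix.diagonal_apply,
      gw, hxz, hreg x, Matrix.sub_apply]

lemma rmat_entries (x y : V) :
    rmat G x y = Lplus G x x + Lplus G y y - Lplus G x y - Lplus G y x := by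
  have hmv : ∀ z, (Lplus G *ᵥ uvec x y) z = Lplus G z x - Lplus G z y := by
    intro z
    simp [mulVec, dotProduct, uvec, mul_sub, Finset.sum_sub_distrib, mul_ite]
  rw [rmat]
  rw [show uvec x y ⬝ᵥ (Lplus G *ᵥ uvec x y)
      = ∑ z, uvec x y z * ((Lplus G *ᵥ uvec x y) z) from rfl]
  rw [Finset.sum_congr rfl fun z _ => by rw [hmv z]]
  simp [uvec, sub_mul, Finset.sum_sub_distrib, ite_mul]
  ring

lemma foster (hconn : G.Connected) {d : ℕ} (hreg : G.IsRegularOfDegree d) :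
    ∑ x, ∑ y, gw G x y * rmat G x y = 2 * ((Fintype.card V : ℝ) - 1) := by
  set Lp := Lplus G with hLp
  have htr : (G.lapMatrix ℝ * Lp).trace = (Fintype.card V : ℝ) - 1 := by
    rw [hLp, lap_mul_lplus G hconn, Matrix.trace_sub, Matrix.trace_one, Matrix.trace_smul,
      trace_J, smul_eq_mul, inv_mul_cancel₀ (card_ne hconn.nonempty)]
  have htr2 : (G.lapMatrix ℝ * Lp).trace
      = (d:ℝ) * (∑ x, Lp x x) - ∑ x, ∑ z, gw G x z * Lp z x := by
    have hx : ∀ x, ∑ z, G.lapMatrix ℝ x z * Lp z x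
        = (d:ℝ) * Lp x x - ∑ z, gw G x z * Lp z x := by
      intro x
      rw [Finset.sum_congr rfl fun z _ => by rw [lap_entry G hreg x z, sub_mul]]
      rw [Finset.sum_sub_distrib]
      congr 1
      simp [ite_mul]
    rw [Matrix.trace]
    simp only [Matrix.diag, Matrix.mul_apply]
    rw [Finset.sum_congr rfl fun x _ => hx x, Finset.sum_sub_distrib, ← Finset.mul_sum]
  have hT34 : (∑ x, ∑ y, gw G x y * Lp x y) = ∑ x, ∑ y, gw G x y * Lp y x := by
    rw [Finset.sum_comm]
    exact Finset.sum_congr rfl fun x _ => Finset.sum_congr rfl fun y _ => by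
      rw [gw_symm]
  have hS1 : (∑ x, ∑ y, gw G x y * Lp x x) = (d:ℝ) * ∑ x, Lp x x := by
    rw [Finset.mul_sum]
    exact Finset.sum_congr rfl fun x _ => by
      rw [← Finset.sum_mul, gw_row_sum G hreg]
  have hS2 : (∑ x, ∑ y, gw G x y * Lp y y) = (d:ℝ) * ∑ x, Lp x x := by
    rw [Finset.sum_comm, Finset.mul_sum]
    refine Finset.sum_congr rfl fun y _ => ?_
    rw [← Finset.sum_mul]
    congr 1
    rw [Finset.sum_congr rfl fun x _ => gw_symm G x y, gw_row_sum G hreg]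
  have hexp : ∀ x y, gw G x y * rmat G x y
      = gw G x y * Lp x x + gw G x y * Lp y y - gw G x y * Lp x y - gw G x y * Lp y x := by
    intro x y; rw [rmat_entries]; ring
  rw [Finset.sum_congr rfl fun x _ => Finset.sum_congr rfl fun y _ => hexp x y]
  simp only [Finset.sum_sub_distrib, Finset.sum_add_distrib]
  linarith [htr, htr2, hT34, hS1, hS2]

lemma energy_comp (φ : G ≃g G) (f : V → ℝ) :
    energy (gw G) (fun x => f (φ x)) = energy (gw G) f := by
  unfold energy
  congr 1
  calc ∑ x, ∑ y, gw G x y * ((fun x => f (φ x)) x - (fun x => f (φ x)) y)^2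
      = ∑ x, ∑ y, gw G (φ x) (φ y) * (f (φ x) - f (φ y))^2 := by
        refine Finset.sum_congr rfl fun x _ => Finset.sum_congr rfl fun y _ => ?_
        have hadj : G.Adj (φ x) (φ y) ↔ G.Adj x y := φ.map_adj_iff
        by_cases h : G.Adj x y <;> simp [gw, hadj, h]
    _ = ∑ x, ∑ y, gw G x y * (f x - f y)^2 := by
        rw [← Equiv.sum_comp φ.toEquiv (fun x => ∑ y, gw G x y * (f x - f y)^2)]
        refine Finset.sum_congr rfl fun x _ => ?_
        exact Equiv.sum_comp φ.toEquiv (fun y => gw G (φ x) y * (f (φ x) - f y)^2)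

lemma effRes_comp (φ : G ≃g G) (a b : V) :
    effRes (gw G) (φ a) (φ b) = effRes (gw G) a b := by
  unfold effRes
  congr 1
  congr 1
  ext E
  simp only [Set.mem_setOf_eq]
  constructor
  · rintro ⟨f, h1, h2, rfl⟩
    exact ⟨fun x => f (φ x), h1, h2, (energy_comp G φ f).symm⟩
  · rintro ⟨f, h1, h2, rfl⟩
    refine ⟨fun x => f (φ.symm x), by simp [h1], by simp [h2], ?_⟩
    exact (energy_comp G φ.symm f).symm

lemma energy_one_sub (c : V → V → ℝ) (f : V → ℝ) :
    energy c (fun x => 1 - f x) = energy c f := by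
  unfold energy
  congr 1
  refine Finset.sum_congr rfl fun x _ => Finset.sum_congr rfl fun y _ => ?_
  show c x y * ((1 - f x) - (1 - f y))^2 = c x y * (f x - f y)^2
  ring

lemma effRes_swap (a b : V) : effRes (gw G) a b = effRes (gw G) b a := by
  unfold effRes
  congr 1
  congr 1
  ext E
  simp only [Set.mem_setOf_eq]
  constructor
  · rintro ⟨f, h1, h2, rfl⟩
    exact ⟨fun x => 1 - f x, by simp [h2], by simp [h1], (energy_one_sub (gw G) f).symm⟩
  · rintro ⟨f, h1, h2, rfl⟩
    exact ⟨fun x => 1 - f x, by simp [h2], by simp [h1], (energy_one_sub (gw G) f).symm⟩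


end Aux

/-- For a regular edge-transitive graph, the effective resistance across any
edge equals `(|V| - 1) / |E|`. -/
theorem edge_transitive_effRes {V : Type*} [Fintype V]
    (G : SimpleGraph V) [DecidableRel G.Adj] (hconn : G.Connected)
    (d : ℕ) (hreg : G.IsRegularOfDegree d)
    (htrans : ∀ e₁ ∈ G.edgeSet, ∀ e₂ ∈ G.edgeSet,
      ∃ φ : G ≃g G, Sym2.map φ e₁ = e₂)
    (a b : V) (hab : G.Adj a b) :
    effRes (gw G) a b = ((Fintype.card V : ℝ) - 1) / (numEdges G : ℝ) := by
  classical
  have hne : a ≠ b := G.ne_of_adj hab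
  have hEcard : (numEdges G : ℝ) = (G.edgeFinset.card : ℝ) := by
    rw [numEdges, Set.ncard_eq_toFinset_card']
    simp [SimpleGraph.edgeFinset]
  have hm_pos : 0 < G.edgeFinset.card :=
    Finset.card_pos.2 ⟨s(a,b), by rw [SimpleGraph.mem_edgeFinset]; exact hab⟩
  have hsame : ∀ x y, G.Adj x y → effRes (gw G) x y = effRes (gw G) a b := by
    intro x y hxy
    obtain ⟨φ, hφ⟩ := htrans s(a,b) hab s(x,y) hxy
    rw [Sym2.map_pair_eq, Sym2.eq_iff] at hφ
    rcases hφ with ⟨h1, h2⟩ | ⟨h1, h2⟩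
    · rw [← h1, ← h2, effRes_comp]
    · rw [← h2, ← h1, effRes_swap, effRes_comp]
  have hrsame : ∀ x y, G.Adj x y → rmat G x y = rmat G a b := by
    intro x y hxy
    rw [← effRes_eq_rmat G hconn (G.ne_of_adj hxy), ← effRes_eq_rmat G hconn hne]
    exact hsame x y hxy
  have hfoster := foster G hconn hreg
  have h2m : ((Fintype.card V : ℝ)) * d = 2 * G.edgeFinset.card := by
    have hh := G.sum_degrees_eq_twice_card_edges
    have : ∑ v : V, G.degree v = Fintype.card V * d := by
      rw [Finset.sum_congr rfl fun v _ => hreg v, Finset.sum_const, smul_eq_mul,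
        Finset.card_univ]
    rw [this] at hh
    exact_mod_cast hh
  have hsum : ∑ x, ∑ y, gw G x y * rmat G x y
      = (2 * (G.edgeFinset.card : ℝ)) * rmat G a b := by
    have step1 : ∑ x, ∑ y, gw G x y * rmat G x y
        = ∑ x, ∑ y, gw G x y * rmat G a b := by
      refine Finset.sum_congr rfl fun x _ => Finset.sum_congr rfl fun y _ => ?_
      by_cases h : G.Adj x y
      · rw [hrsame x y h]
      · simp [gw, h]
    rw [step1]
    simp only [← Finset.sum_mul]
    rw [Finset.sum_congr rfl fun x (_ : x ∈ Finset.univ) => gw_row_sum G hreg x,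
      Finset.sum_const, nsmul_eq_mul, Finset.card_univ, h2m]
  rw [hsum] at hfoster
  rw [effRes_eq_rmat G hconn hne, hEcard]
  have hmne : (G.edgeFinset.card : ℝ) ≠ 0 := by
    exact_mod_cast hm_pos.ne'
  rw [eq_div_iff hmne]
  linarith [hfoster]
end
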